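/- Let p, q : Fin m → (Fin 3 → ℝ) be two tuples of points in ℝ³. If all pairwise dot products agree, i.e. p i ⬝ᵥ p j = q i ⬝ᵥ q j for all i, j, then there exists an orthogonal matrix A : Matrix (Fin 3) (Fin 3) ℝ (that is, Aᵀ * A = 1) such that A.mulVec (p i) = q i for all i. -/

import Mathlib

open Matrix

theorem exists_orthogonal_of_dotProduct_eq {m : ℕ}
    (p q : Fin m → (Fin 3 → ℝ))
    (h : ∀ i j, p i ⬝ᵥ p j = q i ⬝ᵥ q j) :
    ∃ A : Matrix (Fin 3) (Fin 3) ℝ, Aᵀ * A = 1 ∧ ∀ i, A.mulVec (p i) = q i := by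
  classical
  set p' : Fin m → EuclideanSpace ℝ (Fin 3) := fun i => (WithLp.equiv 2 _).symm (p i) with hp'
  set q' : Fin m → EuclideanSpace ℝ (Fin 3) := fun i => (WithLp.equiv 2 _).symm (q i) with hq'
  have hinner : ∀ i j, (inner ℝ (p' i) (p' j) : ℝ) = inner ℝ (q' i) (q' j) := by
    intro i j
    simp only [PiLp.inner_apply, RCLike.inner_apply, conj_trivial, hp', hq',
      WithLp.equiv_symm_apply, PiLp.toLp_apply]
    simpa only [dotProduct, mul_comm] using h i j
  set P : (Fin m → ℝ) →ₗ[ℝ] EuclideanSpace ℝ (Fin 3) := Fintype.linearCombination ℝ p' with hP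
  set Q : (Fin m → ℝ) →ₗ[ℝ] EuclideanSpace ℝ (Fin 3) := Fintype.linearCombination ℝ q' with hQ
  have key : ∀ c d : Fin m → ℝ, (inner ℝ (P c) (P d) : ℝ) = inner ℝ (Q c) (Q d) := by
    intro c d
    simp only [hP, hQ, Fintype.linearCombination_apply, sum_inner, inner_sum,
      real_inner_smul_left, real_inner_smul_right]
    exact Finset.sum_congr rfl fun i _ => Finset.sum_congr rfl fun j _ => by rw [hinner]
  have hker : LinearMap.ker P ≤ LinearMap.ker Q := by
    intro c hc
    rw [LinearMap.mem_ker] at hc ⊢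
    have := key c c
    rw [hc, inner_zero_left] at this
    exact inner_self_eq_zero.mp this.symm
  set f0 : ((Fin m → ℝ) ⧸ LinearMap.ker P) →ₗ[ℝ] EuclideanSpace ℝ (Fin 3) :=
    (LinearMap.ker P).liftQ Q hker with hf0
  set f : LinearMap.range P →ₗ[ℝ] EuclideanSpace ℝ (Fin 3) :=
    f0 ∘ₗ P.quotKerEquivRange.symm.toLinearMap with hf
  have hfP : ∀ c : Fin m → ℝ, f ⟨P c, LinearMap.mem_range_self P c⟩ = Q c := by
    intro c
    have h1 : P.quotKerEquivRange.symm ⟨P c, LinearMap.mem_range_self P c⟩ =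
        Submodule.Quotient.mk c := by
      rw [LinearEquiv.symm_apply_eq]
      exact Subtype.ext (P.quotKerEquivRange_apply_mk c)
    simp [hf, hf0, h1]
  have hnorm : ∀ x : LinearMap.range P, ‖f x‖ = ‖x‖ := by
    rintro ⟨x, c, rfl⟩
    rw [hfP c]
    have := (key c c).symm
    show ‖Q c‖ = ‖P c‖
    rw [norm_eq_sqrt_real_inner (Q c), norm_eq_sqrt_real_inner (P c), this]
  set L : LinearMap.range P →ₗᵢ[ℝ] EuclideanSpace ℝ (Fin 3) := ⟨f, hnorm⟩ with hL
  set F := L.extend with hF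
  have hP1 : ∀ i, P (Pi.single i 1) = p' i := by
    intro i
    simp [hP, Fintype.linearCombination_apply, Pi.single_apply]
  have hQ1 : ∀ i, Q (Pi.single i 1) = q' i := by
    intro i
    simp [hQ, Fintype.linearCombination_apply, Pi.single_apply]
  have hFp : ∀ i, F (p' i) = q' i := by
    intro i
    have hmem : p' i ∈ LinearMap.range P := hP1 i ▸ LinearMap.mem_range_self P _
    have h2 : F (p' i) = L ⟨p' i, hmem⟩ := L.extend_apply ⟨p' i, hmem⟩
    rw [h2]
    have h3 : (⟨p' i, hmem⟩ : LinearMap.range P) =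
        ⟨P (Pi.single i 1), LinearMap.mem_range_self P _⟩ := Subtype.ext (hP1 i).symm
    show f _ = _
    rw [h3, hfP, hQ1]
  -- now build the matrix
  set F' : (Fin 3 → ℝ) →ₗ[ℝ] (Fin 3 → ℝ) :=
    (WithLp.linearEquiv 2 ℝ _).toLinearMap ∘ₗ F.toLinearMap ∘ₗ
      (WithLp.linearEquiv 2 ℝ _).symm.toLinearMap with hF'
  set A := LinearMap.toMatrix' F' with hA
  have hAmul : ∀ v : Fin 3 → ℝ, A.mulVec v = F' v := by
    intro v
    rw [← Matrix.toLin'_apply, hA, Matrix.toLin'_toMatrix']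
  have hdot : ∀ x y : Fin 3 → ℝ, A.mulVec x ⬝ᵥ A.mulVec y = x ⬝ᵥ y := by
    intro x y
    rw [hAmul, hAmul]
    have := F.inner_map_map ((WithLp.equiv 2 _).symm x) ((WithLp.equiv 2 _).symm y)
    simpa only [PiLp.inner_apply, RCLike.inner_apply, conj_trivial,
      WithLp.equiv_symm_apply, PiLp.toLp_apply, dotProduct, hF', LinearMap.comp_apply,
      LinearEquiv.coe_coe, WithLp.coe_linearEquiv, WithLp.coe_symm_linearEquiv,
      LinearIsometry.coe_toLinearMap, mul_comm] using this
  refine ⟨A, ?_, ?_⟩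
  · ext i j
    have := hdot (Pi.single i 1) (Pi.single j 1)
    rw [Matrix.mulVec_single, Matrix.mulVec_single] at this
    simpa [Matrix.mul_apply, dotProduct, Pi.single_apply, Matrix.one_apply,
      mul_comm, eq_comm] using this
  · intro i
    have := hFp i
    rw [hAmul]
    show (F ((WithLp.equiv 2 _).symm (p i)) : Fin 3 → ℝ) = q i
    rw [show (WithLp.equiv 2 (Fin 3 → ℝ)).symm (p i) = p' i from rfl, this]
    rfl
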